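/- arXiv:1606.00781 — 4 statements merged into one kernel-verified Lean document; each statement's English description precedes it below -/
import Mathlib

section
/- Let (A, η) be a finite-dimensional commutative Frobenius algebra over a field K with basis e₁, …, e_s and Euler element 𝐞 = Σ_{a,b} η^{ab} e_a·e_b. Then for every integer g ≥ 1 and all v, u ∈ A: Σ_{i,j,a,b} η(v, e_i·e_j) η^{ia} η^{jb} ε(e_a·e_b·u·𝐞^{g−1}) = ε(v·u·𝐞^{g}). (Edge-contraction axiom ECA 2, connected case, for the 2D TQFT amplitudes Ω_{g,n}(v₁,…,vₙ) = ε(v₁⋯vₙ·𝐞^g).) -/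
/-- (ECA 2, connected case.) For a finite-dimensional commutative
Frobenius algebra `(A, η)` over a field `K` with basis `e₁, …, e_s`, inverse pairing
matrix `N = (η^{ij})` and Euler element `𝐞 = Σ_{a,b} η^{ab} e_a·e_b`, one has, for every
integer `g ≥ 1` and all `v, u ∈ A`:
`Σ_{i,j,a,b} η(v, e_i·e_j) η^{ia} η^{jb} ε(e_a·e_b·u·𝐞^{g−1}) = ε(v·u·𝐞^{g})`. -/
theorem stmt7 (K A : Type*) [Field K] [CommRing A] [Algebra K A]
    (η : LinearMap.BilinForm K A)
    (hsym : ∀ u v : A, η u v = η v u)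
    (hnd : ∀ v : A, (∀ u : A, η v u = 0) → v = 0)
    (hinv : ∀ u v w : A, η (u * v) w = η u (v * w))
    {s : ℕ} (e : Module.Basis (Fin s) K A)
    (N : Matrix (Fin s) (Fin s) K)
    (hN : (Matrix.of fun i j => η (e i) (e j)) * N = 1)
    (hN' : N * (Matrix.of fun i j => η (e i) (e j)) = 1)
    (E : A) (hE : E = ∑ a, ∑ b, N a b • (e a * e b)) :
    ∀ g : ℕ, 1 ≤ g → ∀ v u : A,
      (∑ i, ∑ j, ∑ a, ∑ b,
          η v (e i * e j) * N i a * N j b * η 1 (e a * e b * u * E ^ (g - 1)))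
        = η 1 (v * u * E ^ g) := by
  -- coefficient extraction: ∑ i, η x (e i) * N i a = (repr x) a
  have hcoef : ∀ (x : A) (a : Fin s), (∑ i, η x (e i) * N i a) = e.repr x a := by
    intro x a
    have hxe : ∀ i, η x (e i) = ∑ b, e.repr x b * η (e b) (e i) := by
      intro i
      conv_lhs => rw [← e.sum_repr x]
      rw [map_sum, LinearMap.sum_apply]
      simp [map_sum, smul_eq_mul]
    calc (∑ i, η x (e i) * N i a)
        = ∑ i, ∑ b, e.repr x b * (η (e b) (e i) * N i a) := by
          simp [hxe, Finset.sum_mul, mul_assoc]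
      _ = ∑ b, e.repr x b * (∑ i, η (e b) (e i) * N i a) := by
          rw [Finset.sum_comm]; simp [Finset.mul_sum]
      _ = e.repr x a := by
          have h1 : ∀ b, (∑ i, η (e b) (e i) * N i a)
              = ((Matrix.of fun i j => η (e i) (e j)) * N) b a := by
            intro b; simp [Matrix.mul_apply]
          simp only [h1, hN, Matrix.one_apply]
          simp
  -- reconstruction: ∑ i a, η x (e i) * N i a * ε(e a * w) = ε(x * w)
  have hrec : ∀ (x w : A), (∑ i, ∑ a, η x (e i) * N i a * η 1 (e a * w))
      = η 1 (x * w) := by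
    intro x w
    rw [Finset.sum_comm]
    have h2 : ∀ a, (∑ i, η x (e i) * N i a * η 1 (e a * w))
        = e.repr x a * η 1 (e a * w) := by
      intro a; rw [← hcoef x a, Finset.sum_mul]
    simp only [h2]
    conv_rhs => rw [← e.sum_repr x, Finset.sum_mul]
    simp [smul_mul_assoc, map_sum, smul_eq_mul]
  intro g hg v u
  -- reorder sums: i j a b ↦ j b i a
  have swap : ∀ (f : Fin s → Fin s → Fin s → Fin s → K),
      (∑ i, ∑ j, ∑ a, ∑ b, f i j a b) = ∑ j, ∑ b, ∑ i, ∑ a, f i j a b := by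
    intro f
    rw [Finset.sum_comm]
    refine Finset.sum_congr rfl fun j _ => ?_
    rw [show (∑ i, ∑ a, ∑ b, f i j a b) = ∑ i, ∑ b, ∑ a, f i j a b from
      Finset.sum_congr rfl fun i _ => Finset.sum_comm, Finset.sum_comm]
  rw [swap]
  have step1 : ∀ j b : Fin s,
      (∑ i, ∑ a, η v (e i * e j) * N i a * N j b * η 1 (e a * e b * u * E ^ (g - 1)))
        = N j b * η 1 (v * e j * (e b * u * E ^ (g - 1))) := by
    intro j b
    rw [← hrec (v * e j) (e b * u * E ^ (g - 1))]
    rw [Finset.mul_sum]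
    refine Finset.sum_congr rfl fun i _ => ?_
    rw [Finset.mul_sum]
    refine Finset.sum_congr rfl fun a _ => ?_
    have h3 : η v (e i * e j) = η (v * e j) (e i) := by
      rw [hinv, mul_comm (e j) (e i)]
    have h4 : e a * e b * u * E ^ (g - 1) = e a * (e b * u * E ^ (g - 1)) := by ring
    rw [h3, h4]
    ring
  simp only [step1]
  -- now ∑ j b, N j b * ε(v * e j * (e b * u * E^(g-1))) = ε(v * u * E^g)
  have hpow : E ^ (g - 1) * E = E ^ g := by
    rw [← pow_succ, Nat.sub_add_cancel hg]
  have key : ∀ w : A, (∑ j, ∑ b, N j b * η 1 ((e j * e b) * w))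
      = η 1 (E * w) := by
    intro w
    rw [hE, Finset.sum_mul]
    simp [Finset.sum_mul, smul_mul_assoc, map_sum, smul_eq_mul]
  calc (∑ j, ∑ b, N j b * η 1 (v * e j * (e b * u * E ^ (g - 1))))
      = ∑ j, ∑ b, N j b * η 1 ((e j * e b) * (v * u * E ^ (g - 1))) := by
        refine Finset.sum_congr rfl fun j _ => Finset.sum_congr rfl fun b _ => ?_
        rw [show v * e j * (e b * u * E ^ (g - 1))
            = (e j * e b) * (v * u * E ^ (g - 1)) from by ring]
    _ = η 1 (E * (v * u * E ^ (g - 1))) := key _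
    _ = η 1 (v * u * E ^ g) := by
        rw [show E * (v * u * E ^ (g - 1)) = v * u * E ^ g from by rw [← hpow]; ring]
end

section
/- Let (A, η) be a finite-dimensional commutative Frobenius algebra over a field K with basis e₁, …, e_s and Euler element 𝐞 = Σ_{a,b} η^{ab} e_a·e_b. Then for all integers g₁, g₂ ≥ 0 and all v, u, w ∈ A: Σ_{k,ℓ,a,b} η(v, e_k·e_ℓ) η^{ka} η^{ℓb} ε(e_a·u·𝐞^{g₁}) · ε(e_b·w·𝐞^{g₂}) = ε(v·u·w·𝐞^{g₁+g₂}). (Edge-contraction axiom ECA 2, disconnected case; this is the defining identity of the twisted kernel δ* for the 2D TQFT amplitudes Ω_{g,n}(v₁,…,vₙ) = ε(v₁⋯vₙ·𝐞^g).) -/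
/-- (ECA 2, disconnected case; defining identity of the twisted kernel
`δ*`.) For a finite-dimensional commutative Frobenius algebra `(A, η)` over a field `K`
with basis `e₁, …, e_s`, inverse pairing matrix `N = (η^{ij})` and Euler element
`𝐞 = Σ_{a,b} η^{ab} e_a·e_b`, one has, for all integers `g₁, g₂ ≥ 0` and all `v, u, w ∈ A`:
`Σ_{k,ℓ,a,b} η(v, e_k·e_ℓ) η^{ka} η^{ℓb} ε(e_a·u·𝐞^{g₁}) · ε(e_b·w·𝐞^{g₂})
  = ε(v·u·w·𝐞^{g₁+g₂})`. -/
theorem stmt8 (K A : Type*) [Field K] [CommRing A] [Algebra K A]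
    (η : LinearMap.BilinForm K A)
    (hsym : ∀ u v : A, η u v = η v u)
    (hnd : ∀ v : A, (∀ u : A, η v u = 0) → v = 0)
    (hinv : ∀ u v w : A, η (u * v) w = η u (v * w))
    {s : ℕ} (e : Module.Basis (Fin s) K A)
    (N : Matrix (Fin s) (Fin s) K)
    (hN : (Matrix.of fun i j => η (e i) (e j)) * N = 1)
    (hN' : N * (Matrix.of fun i j => η (e i) (e j)) = 1)
    (E : A) (hE : E = ∑ a, ∑ b, N a b • (e a * e b)) :
    ∀ g₁ g₂ : ℕ, ∀ v u w : A,
      (∑ k, ∑ l, ∑ a, ∑ b,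
          η v (e k * e l) * N k a * N l b
            * η 1 (e a * u * E ^ g₁) * η 1 (e b * w * E ^ g₂))
        = η 1 (v * u * w * E ^ (g₁ + g₂)) := by
  -- generic triple-sum reorder
  have swap3 : ∀ (f : Fin s → Fin s → Fin s → K),
      (∑ k, ∑ a, ∑ i, f k a i) = ∑ i, ∑ a, ∑ k, f k a i := by
    intro f
    have h1 : ∀ k, (∑ a, ∑ i, f k a i) = ∑ i, ∑ a, f k a i :=
      fun k => Finset.sum_comm
    simp only [h1]
    rw [Finset.sum_comm]
    try exact Finset.sum_congr rfl fun i _ => Finset.sum_comm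
  -- generic quadruple-sum reorder
  have swap4 : ∀ (f : Fin s → Fin s → Fin s → Fin s → K),
      (∑ k, ∑ l, ∑ a, ∑ b, f k l a b) = ∑ l, ∑ b, ∑ k, ∑ a, f k l a b := by
    intro f
    rw [Finset.sum_comm]
    refine Finset.sum_congr rfl fun l _ => ?_
    have h1 : ∀ k, (∑ a, ∑ b, f k l a b) = ∑ b, ∑ a, f k l a b :=
      fun k => Finset.sum_comm
    simp only [h1]
    rw [Finset.sum_comm]
    try exact Finset.sum_congr rfl fun b _ => Finset.sum_congr rfl fun k _ =>
      Finset.sum_comm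
  have hNe : ∀ (i a : Fin s), (∑ k, η (e i) (e k) * N k a) = if i = a then 1 else 0 := by
    intro i a
    have := congrFun (congrFun hN i) a
    simpa [Matrix.mul_apply, Matrix.one_apply] using this
  -- resolution of identity
  have key : ∀ x y : A, (∑ k, ∑ a, η x (e k) * N k a * η (e a) y) = η x y := by
    intro x y
    have hx : ∀ k : Fin s, η x (e k) = ∑ i, e.repr x i * η (e i) (e k) := by
      intro k
      conv_lhs => rw [← e.sum_repr x]
      simp [smul_eq_mul, -Module.Basis.sum_repr]
    calc (∑ k, ∑ a, η x (e k) * N k a * η (e a) y)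
        = ∑ k, ∑ a, ∑ i, e.repr x i * (η (e i) (e k) * N k a * η (e a) y) := by
          refine Finset.sum_congr rfl fun k _ => Finset.sum_congr rfl fun a _ => ?_
          rw [hx k, Finset.sum_mul, Finset.sum_mul]
          try exact Finset.sum_congr rfl fun i _ => by ring
      _ = ∑ i, ∑ a, ∑ k, e.repr x i * (η (e i) (e k) * N k a * η (e a) y) := swap3 _
      _ = ∑ i, e.repr x i * (∑ a, (∑ k, η (e i) (e k) * N k a) * η (e a) y) := by
          refine Finset.sum_congr rfl fun i _ => ?_
          rw [Finset.mul_sum]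
          refine Finset.sum_congr rfl fun a _ => ?_
          rw [Finset.sum_mul, Finset.mul_sum]
          try exact Finset.sum_congr rfl fun k _ => by ring
      _ = ∑ i, e.repr x i * η (e i) y := by
          refine Finset.sum_congr rfl fun i _ => ?_
          congr 1
          rw [Finset.sum_congr rfl fun a (_ : a ∈ Finset.univ) => by rw [hNe i a]]
          simp
      _ = η x y := by
          conv_rhs => rw [← e.sum_repr x]
          simp [smul_eq_mul, -Module.Basis.sum_repr]
  intro g₁ g₂ v u w
  set X := u * E ^ g₁ with hX
  set Y := w * E ^ g₂ with hY
  have h1 : ∀ a : Fin s, η 1 (e a * u * E ^ g₁) = η (e a) X := by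
    intro a; rw [mul_assoc, hsym, hinv, mul_one]
  have h2 : ∀ b : Fin s, η 1 (e b * w * E ^ g₂) = η (e b) Y := by
    intro b; rw [mul_assoc, hsym, hinv, mul_one]
  calc (∑ k, ∑ l, ∑ a, ∑ b,
          η v (e k * e l) * N k a * N l b
            * η 1 (e a * u * E ^ g₁) * η 1 (e b * w * E ^ g₂))
      = ∑ k, ∑ l, ∑ a, ∑ b,
          (η (e l * v) (e k) * N k a * η (e a) X) * (N l b * η (e b) Y) := by
        refine Finset.sum_congr rfl fun k _ => Finset.sum_congr rfl fun l _ =>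
          Finset.sum_congr rfl fun a _ => Finset.sum_congr rfl fun b _ => ?_
        rw [h1 a, h2 b]
        have hv : η v (e k * e l) = η (e l * v) (e k) := by
          rw [← hinv v (e k) (e l), mul_comm v (e k), hinv (e k) v (e l),
            hsym (e k), mul_comm v (e l)]
        rw [hv]; ring
    _ = ∑ l, ∑ b, ∑ k, ∑ a,
          (η (e l * v) (e k) * N k a * η (e a) X) * (N l b * η (e b) Y) := swap4 _
    _ = ∑ l, ∑ b, η (e l * v) X * (N l b * η (e b) Y) := by
        refine Finset.sum_congr rfl fun l _ => Finset.sum_congr rfl fun b _ => ?_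
        rw [← key (e l * v) X, Finset.sum_mul]
        exact Finset.sum_congr rfl fun k _ => (Finset.sum_mul _ _ _).symm
    _ = ∑ l, ∑ b, η (v * X) (e l) * N l b * η (e b) Y := by
        refine Finset.sum_congr rfl fun l _ => Finset.sum_congr rfl fun b _ => ?_
        rw [hinv, hsym]; ring
    _ = η (v * X) Y := key (v * X) Y
    _ = η 1 (v * u * w * E ^ (g₁ + g₂)) := by
        rw [← one_mul (v * X), hinv]
        congr 1
        rw [hX, hY, pow_add]
        ring
end

section
/- (Twisted generalized Catalan/dessin recursion.) Let (A, η) be a finite-dimensional commutative Frobenius algebra over a field K with basis e₁, …, e_s, Euler element 𝐞, and amplitudes Ω_{g,n}(v₁,…,vₙ) = ε(v₁⋯vₙ·𝐞^g). Suppose given, for all integers g ≥ 0 and n ≥ 1, functions C_{g,n} : (ℤ_{≥0})^n → K (with the convention C_{g,n} := 0 whenever g < 0) which satisfy, for every (g,n) with 2g−2+n > 0 and every (μ₁,…,μₙ) ∈ (ℤ_{≥0})^n with μ₁ ≥ 1, the recursion C_{g,n}(μ₁,…,μₙ) = Σ_{j=2}^{n} μ_j C_{g,n−1}(μ₁+μ_j−2,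 μ_{[n]∖{1,j}}) + Σ_{α+β=μ₁−2, α,β ≥ 0} ( C_{g−1,n+1}(α, β, μ₂,…,μₙ) + Σ_{g₁+g₂=g} Σ_{I ⊔ J = {2,…,n}} C_{g₁,|I|+1}(α, μ_I) · C_{g₂,|J|+1}(β, μ_J) ). Define 𝒞_{g,n}(μ₁,…,μₙ; v₁,…,vₙ) := C_{g,n}(μ₁,…,μₙ) · Ω_{g,n}(v₁,…,vₙ). Then for every (g,n) with 2g−2+n > 0, every μ with μ₁ ≥ 1 and all v₁,…,vₙ ∈ A: 𝒞_{g,n}(μ; v₁,…,vₙ) = Σ_{j=2}^{n} μ_j 𝒞_{g,n−1}(μ₁+μ_j−2, μ_{[n]∖{1,j}}; v₁·v_j, v_{[n]∖{1,j}}) + Σ_{α+β=μ₁−2} ( Σ_{i,j,a,b} η(v₁, e_i·e_j) η^{ia} η^{jb} 𝒞_{g−1,n+1}(α, β, μ₂,…,μₙ; e_a, e_b, v₂,…,vₙ) + Σ_{g₁+g₂=g} Σ_{I ⊔ J = {2,…,n}} Σ_{k,ℓ,a,b} η(v₁, e_k·e_ℓ) η^{ka} η^{ℓb} 𝒞_{g₁,|I|+1}(α,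 μ_I; e_a, v_I) · 𝒞_{g₂,|J|+1}(β, μ_J; e_b, v_J) ). -/
/-- The subtuple of a tuple `f : Fin m → α` indexed by a finite set `S` of indices,
taken in increasing order. -/
noncomputable def subT {α : Type*} {m : ℕ} (f : Fin m → α) (S : Finset (Fin m)) :
    Fin S.card → α :=
  fun i => f (S.orderIsoOfFin rfl i)

/-- The 2D TQFT twist `𝒞_{g,n}(μ; v₁,…,vₙ) := C_{g,n}(μ)·Ω_{g,n}(v₁,…,vₙ)` of a counting
function `C`, where `Ω_{g,n}(v₁,…,vₙ) = ε(v₁⋯vₙ·𝐞^g)`, `ε = η(1,·)` and `E = 𝐞` is the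
Euler element (for `g < 0` the convention `C_{g,n} = 0` makes the value vanish). -/
noncomputable def twistC {K A : Type*} [Field K] [CommRing A] [Algebra K A]
    (η : LinearMap.BilinForm K A) (E : A)
    (C : ℤ → (n : ℕ) → (Fin n → ℕ) → K)
    (g : ℤ) (n : ℕ) (μ : Fin n → ℕ) (v : Fin n → A) : K :=
  C g n μ * η 1 ((∏ i, v i) * E ^ g.toNat)

lemma prod_subT {M : Type*} [CommMonoid M] {m : ℕ} (f : Fin m → M) (S : Finset (Fin m)) :
    ∏ i, subT f S i = ∏ x ∈ S, f x := by
  rw [← Finset.prod_coe_sort S f]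
  exact Fintype.prod_equiv (S.orderIsoOfFin rfl).toEquiv _ _ (fun i => rfl)

section
variable {K A : Type*} [Field K] [CommRing A] [Algebra K A]
variable (η : LinearMap.BilinForm K A) {s : ℕ} (e : Module.Basis (Fin s) K A)
  (N : Matrix (Fin s) (Fin s) K)

lemma repro1 (hN : (Matrix.of fun i j => η (e i) (e j)) * N = 1) (x : A) :
    ∑ i, ∑ a, (η x (e i) * N i a) • e a = x := by
  have hb : ∀ p, ∑ i, ∑ a, (η (e p) (e i) * N i a) • e a = e p := by
    intro p
    rw [Finset.sum_comm]
    calc ∑ a, ∑ i, (η (e p) (e i) * N i a) • e a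
        = ∑ a, (((Matrix.of fun i j => η (e i) (e j)) * N) p a) • e a := by
          refine Finset.sum_congr rfl fun a _ => ?_
          rw [Matrix.mul_apply, Finset.sum_smul]
          simp [Matrix.of_apply]
      _ = e p := by rw [hN]; simp [Matrix.one_apply]
  conv_lhs => rw [← e.sum_repr x]
  simp only [map_sum, LinearMap.sum_apply, map_smul, LinearMap.smul_apply, smul_eq_mul,
    Finset.sum_mul, Finset.sum_smul]
  refine Eq.trans ?_ (e.sum_repr x)
  rw [Finset.sum_comm]
  refine Eq.trans (Finset.sum_congr rfl fun a _ => Finset.sum_comm) ?_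
  rw [Finset.sum_comm]
  refine Finset.sum_congr rfl fun p _ => ?_
  rw [Finset.sum_comm]
  conv_rhs => rw [← hb p]
  rw [Finset.smul_sum]
  refine Finset.sum_congr rfl fun i _ => ?_
  rw [Finset.smul_sum]
  refine Finset.sum_congr rfl fun a _ => ?_
  rw [smul_smul, mul_assoc]

end

section
variable {K A : Type*} [Field K] [CommRing A] [Algebra K A]
variable (η : LinearMap.BilinForm K A) {s : ℕ} (e : Module.Basis (Fin s) K A)
  (N : Matrix (Fin s) (Fin s) K)

lemma repro2 (hinv : ∀ u v w : A, η (u * v) w = η u (v * w))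
    (hN' : N * (Matrix.of fun i j => η (e i) (e j)) = 1) (y : A) :
    ∑ l, ∑ b, (N l b * η 1 (e b * y)) • e l = y := by
  have hb : ∀ p, ∑ l, ∑ b, (N l b * η 1 (e b * e p)) • e l = e p := by
    intro p
    have h1 : ∀ b, η (1 : A) (e b * e p) = η (e b) (e p) := by
      intro b; rw [← hinv, one_mul]
    calc ∑ l, ∑ b, (N l b * η 1 (e b * e p)) • e l
        = ∑ l, ((N * (Matrix.of fun i j => η (e i) (e j))) l p) • e l := by
          refine Finset.sum_congr rfl fun l _ => ?_
          rw [Matrix.mul_apply, Finset.sum_smul]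
          simp [Matrix.of_apply, h1]
      _ = e p := by rw [hN']; simp [Matrix.one_apply]
  conv_lhs => rw [← e.sum_repr y]
  simp only [Finset.mul_sum, mul_smul_comm, map_sum, map_smul, smul_eq_mul,
    Finset.sum_smul, mul_left_comm, smul_smul]
  refine Eq.trans ?_ (e.sum_repr y)
  rw [Finset.sum_comm]
  refine Eq.trans (Finset.sum_congr rfl fun a _ => Finset.sum_comm) ?_
  rw [Finset.sum_comm]
  refine Finset.sum_congr rfl fun p _ => ?_
  rw [Finset.sum_comm]
  conv_rhs => rw [← hb p]
  rw [Finset.smul_sum]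
  refine Finset.sum_congr rfl fun l _ => ?_
  rw [Finset.smul_sum]
  refine Finset.sum_congr rfl fun b _ => ?_
  rw [smul_smul]
  ring_nf

lemma H1 (hN : (Matrix.of fun i j => η (e i) (e j)) * N = 1) (x z : A) :
    ∑ i, ∑ a, (η x (e i) * N i a) * η 1 (e a * z) = η 1 (x * z) := by
  conv_rhs => rw [← repro1 η e N hN x]
  rw [Finset.sum_mul, map_sum]
  refine Finset.sum_congr rfl fun i _ => ?_
  rw [Finset.sum_mul, map_sum]
  refine Finset.sum_congr rfl fun a _ => ?_
  rw [smul_mul_assoc, map_smul, smul_eq_mul]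

lemma H2 (hinv : ∀ u v w : A, η (u * v) w = η u (v * w))
    (hN' : N * (Matrix.of fun i j => η (e i) (e j)) = 1) (u X Y : A) :
    ∑ l, ∑ b, (N l b * η 1 (e b * Y)) * η 1 (u * e l * X) = η 1 (u * Y * X) := by
  conv_rhs => rw [← repro2 η e N hinv hN' Y]
  rw [Finset.mul_sum, Finset.sum_mul, map_sum]
  refine Finset.sum_congr rfl fun l _ => ?_
  rw [Finset.mul_sum, Finset.sum_mul, map_sum]
  refine Finset.sum_congr rfl fun b _ => ?_
  rw [mul_smul_comm, smul_mul_assoc, map_smul, smul_eq_mul]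

lemma sum_swap4 {β : Type*} [AddCommMonoid β] (f : Fin s → Fin s → Fin s → Fin s → β) :
    ∑ i, ∑ j, ∑ a, ∑ b, f i j a b = ∑ j, ∑ b, ∑ i, ∑ a, f i j a b := by
  rw [Finset.sum_comm]
  refine Finset.sum_congr rfl fun j _ => ?_
  refine Eq.trans (Finset.sum_congr rfl fun i _ => Finset.sum_comm) ?_
  exact Finset.sum_comm

lemma LA (hsym : ∀ u v : A, η u v = η v u)
    (hinv : ∀ u v w : A, η (u * v) w = η u (v * w))
    (hN : (Matrix.of fun i j => η (e i) (e j)) * N = 1)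
    (hN' : N * (Matrix.of fun i j => η (e i) (e j)) = 1)
    (E : A) (hE : E = ∑ a, ∑ b, N a b • (e a * e b)) (u w : A) :
    ∑ i, ∑ j, ∑ a, ∑ b, η u (e i * e j) * N i a * N j b * η 1 (e a * e b * w)
      = η 1 (u * E * w) := by
  have heq : ∀ i j : Fin s, η u (e i * e j) = η (u * e j) (e i) := by
    intro i j; rw [hinv, mul_comm (e j) (e i)]
  rw [sum_swap4]
  calc ∑ j, ∑ b, ∑ i, ∑ a, η u (e i * e j) * N i a * N j b * η 1 (e a * e b * w)
      = ∑ j, ∑ b, N j b * η 1 (u * e j * (e b * w)) := by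
        refine Finset.sum_congr rfl fun j _ => Finset.sum_congr rfl fun b _ => ?_
        rw [← H1 η e N hN (u * e j) (e b * w), Finset.mul_sum]
        refine Finset.sum_congr rfl fun i _ => ?_
        rw [Finset.mul_sum]
        refine Finset.sum_congr rfl fun a _ => ?_
        rw [heq i j, mul_assoc (e a)]
        ring
    _ = η 1 (u * E * w) := by
        rw [hE, Finset.mul_sum, Finset.sum_mul, map_sum]
        refine Finset.sum_congr rfl fun j _ => ?_
        rw [Finset.mul_sum, Finset.sum_mul, map_sum]
        refine Finset.sum_congr rfl fun b _ => ?_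
        rw [mul_smul_comm, smul_mul_assoc, map_smul, smul_eq_mul]
        congr 1
        ring

lemma LB (hsym : ∀ u v : A, η u v = η v u)
    (hinv : ∀ u v w : A, η (u * v) w = η u (v * w))
    (hN : (Matrix.of fun i j => η (e i) (e j)) * N = 1)
    (hN' : N * (Matrix.of fun i j => η (e i) (e j)) = 1)
    (u X Y : A) :
    ∑ k, ∑ l, ∑ a, ∑ b, η u (e k * e l) * N k a * N l b * (η 1 (e a * X) * η 1 (e b * Y))
      = η 1 (u * Y * X) := by
  have heq : ∀ k l : Fin s, η u (e k * e l) = η (u * e l) (e k) := by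
    intro k l; rw [hinv, mul_comm (e l) (e k)]
  rw [sum_swap4]
  calc ∑ l, ∑ b, ∑ k, ∑ a, η u (e k * e l) * N k a * N l b * (η 1 (e a * X) * η 1 (e b * Y))
      = ∑ l, ∑ b, (N l b * η 1 (e b * Y)) * η 1 (u * e l * X) := by
        refine Finset.sum_congr rfl fun l _ => Finset.sum_congr rfl fun b _ => ?_
        rw [← H1 η e N hN (u * e l) X, Finset.mul_sum]
        refine Finset.sum_congr rfl fun k _ => ?_
        rw [Finset.mul_sum]
        refine Finset.sum_congr rfl fun a _ => ?_
        rw [heq k l]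
        ring
    _ = η 1 (u * Y * X) := H2 η e N hinv hN' u X Y

end

/-- (Twisted generalized Catalan/dessin recursion.) If the counting
functions `C_{g,n}` satisfy the generalized Catalan recursion, then their twists
`𝒞_{g,n}(μ; v) = C_{g,n}(μ)·Ω_{g,n}(v)` by the 2D TQFT of the Frobenius algebra `(A, η)`
satisfy the edge-contraction–twisted recursion, where the genus–reduction and splitting
terms are contracted through the coproduct coefficients
`Σ_{i,j,a,b} η(v₁, e_i·e_j) η^{ia} η^{jb} (…e_a…)(…e_b…)`. -/
theorem stmt10 (K A : Type*) [Field K] [CommRing A] [Algebra K A]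
    (η : LinearMap.BilinForm K A)
    (hsym : ∀ u v : A, η u v = η v u)
    (hnd : ∀ v : A, (∀ u : A, η v u = 0) → v = 0)
    (hinv : ∀ u v w : A, η (u * v) w = η u (v * w))
    {s : ℕ} (e : Module.Basis (Fin s) K A)
    (N : Matrix (Fin s) (Fin s) K)
    (hN : (Matrix.of fun i j => η (e i) (e j)) * N = 1)
    (hN' : N * (Matrix.of fun i j => η (e i) (e j)) = 1)
    (E : A) (hE : E = ∑ a, ∑ b, N a b • (e a * e b))
    (C : ℤ → (n : ℕ) → (Fin n → ℕ) → K)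
    (hCneg : ∀ g : ℤ, g < 0 → ∀ (n : ℕ) (μ : Fin n → ℕ), C g n μ = 0)
    (hrec : ∀ (g m : ℕ) (μ : Fin (m + 1) → ℕ),
      0 < 2 * (g : ℤ) - 2 + (m + 1) → 1 ≤ μ 0 →
      C g (m + 1) μ =
        (∑ j : Fin m, (μ j.succ : K) *
            C g (({j}ᶜ : Finset (Fin m)).card + 1)
              (Fin.cons (μ 0 + μ j.succ - 2) (subT (Fin.tail μ) {j}ᶜ)))
        + ∑ α ∈ Finset.range (μ 0 - 1),
            (C ((g : ℤ) - 1) (m + 2)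
                (Fin.cons α (Fin.cons (μ 0 - 2 - α) (Fin.tail μ)))
              + ∑ g₁ ∈ Finset.range (g + 1), ∑ S : Finset (Fin m),
                  C g₁ (S.card + 1) (Fin.cons α (subT (Fin.tail μ) S)) *
                    C ((g : ℤ) - g₁) (Sᶜ.card + 1)
                      (Fin.cons (μ 0 - 2 - α) (subT (Fin.tail μ) Sᶜ)))) :
    ∀ (g m : ℕ) (μ : Fin (m + 1) → ℕ) (v : Fin (m + 1) → A),
      0 < 2 * (g : ℤ) - 2 + (m + 1) → 1 ≤ μ 0 →
      twistC η E C g (m + 1) μ v =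
        (∑ j : Fin m, (μ j.succ : K) *
            twistC η E C g (({j}ᶜ : Finset (Fin m)).card + 1)
              (Fin.cons (μ 0 + μ j.succ - 2) (subT (Fin.tail μ) {j}ᶜ))
              (Fin.cons (v 0 * v j.succ) (subT (Fin.tail v) {j}ᶜ)))
        + ∑ α ∈ Finset.range (μ 0 - 1),
            ((∑ i, ∑ j, ∑ a, ∑ b,
                η (v 0) (e i * e j) * N i a * N j b *
                  twistC η E C ((g : ℤ) - 1) (m + 2)
                    (Fin.cons α (Fin.cons (μ 0 - 2 - α) (Fin.tail μ)))
                    (Fin.cons (e a) (Fin.cons (e b) (Fin.tail v))))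
              + ∑ g₁ ∈ Finset.range (g + 1), ∑ S : Finset (Fin m),
                  ∑ k, ∑ l, ∑ a, ∑ b,
                    η (v 0) (e k * e l) * N k a * N l b *
                      (twistC η E C g₁ (S.card + 1)
                          (Fin.cons α (subT (Fin.tail μ) S))
                          (Fin.cons (e a) (subT (Fin.tail v) S)) *
                        twistC η E C ((g : ℤ) - g₁) (Sᶜ.card + 1)
                          (Fin.cons (μ 0 - 2 - α) (subT (Fin.tail μ) Sᶜ))
                          (Fin.cons (e b) (subT (Fin.tail v) Sᶜ)))) := by
  intro g m μ v hstab hμ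
  have hPt : (∏ i, v i) = v 0 * ∏ i, Fin.tail v i := by
    rw [Fin.prod_univ_succ]; rfl
  simp only [twistC, Fin.prod_cons, prod_subT, Int.toNat_natCast]
  rw [hrec g m μ hstab hμ, add_mul, Finset.sum_mul, Finset.sum_mul]
  congr 1
  · refine Finset.sum_congr rfl fun j _ => ?_
    have hp : v 0 * v j.succ * ∏ x ∈ ({j}ᶜ : Finset (Fin m)), Fin.tail v x = ∏ i, v i := by
      rw [hPt, Finset.compl_singleton, mul_assoc]
      congr 1
      exact Finset.mul_prod_erase Finset.univ (Fin.tail v) (Finset.mem_univ j)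
    rw [hp]; ring
  · refine Finset.sum_congr rfl fun α hα => ?_
    rw [add_mul, Finset.sum_mul]
    congr 1
    · -- genus reduction term
      by_cases hg : g = 0
      · subst hg
        have h0 : ∀ (n : ℕ) (μ' : Fin n → ℕ), C (-1) n μ' = 0 :=
          hCneg (-1) (by norm_num)
        simp [show ((0:ℕ):ℤ) - 1 = -1 from by norm_num, h0]
      · have hg1 : 1 ≤ g := Nat.one_le_iff_ne_zero.mpr hg
        have ht : ((g:ℤ) - 1).toNat = g - 1 := by omega
        rw [ht]
        symm
        refine Eq.trans (Finset.sum_congr rfl fun i _ => Finset.sum_congr rfl fun j _ =>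
          Finset.sum_congr rfl fun a _ => Finset.sum_congr rfl fun b _ =>
          (show η (v 0) (e i * e j) * N i a * N j b *
              (C ((g:ℤ) - 1) (m + 2) (Fin.cons α (Fin.cons (μ 0 - 2 - α) (Fin.tail μ))) *
                η 1 (e a * (e b * ∏ i, Fin.tail v i) * E ^ (g - 1)))
            = C ((g:ℤ) - 1) (m + 2) (Fin.cons α (Fin.cons (μ 0 - 2 - α) (Fin.tail μ))) *
              (η (v 0) (e i * e j) * N i a * N j b *
                η 1 (e a * e b * ((∏ i, Fin.tail v i) * E ^ (g - 1)))) from by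
            rw [show e a * (e b * ∏ i, Fin.tail v i) * E ^ (g - 1)
                = e a * e b * ((∏ i, Fin.tail v i) * E ^ (g - 1)) from by ring]
            ring)) ?_
        simp only [← Finset.mul_sum]
        rw [LA η e N hsym hinv hN hN' E hE (v 0) ((∏ i, Fin.tail v i) * E ^ (g - 1))]
        congr 1
        have hEpow : E * E ^ (g - 1) = E ^ g := by
          rw [← pow_succ']
          congr 1
          omega
        rw [hPt, ← hEpow]
        ring
    · -- splitting term
      refine Finset.sum_congr rfl fun g₁ hg₁ => ?_
      rw [Finset.sum_mul]
      refine Finset.sum_congr rfl fun S _ => ?_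
      have hle : g₁ ≤ g := by
        have := Finset.mem_range.mp hg₁; omega
      have ht2 : ((g:ℤ) - (g₁:ℤ)).toNat = g - g₁ := by omega
      rw [ht2]
      symm
      refine Eq.trans (Finset.sum_congr rfl fun k _ => Finset.sum_congr rfl fun l _ =>
        Finset.sum_congr rfl fun a _ => Finset.sum_congr rfl fun b _ =>
        (show η (v 0) (e k * e l) * N k a * N l b *
            ((C g₁ (S.card + 1) (Fin.cons α (subT (Fin.tail μ) S)) *
                η 1 ((e a * ∏ x ∈ S, Fin.tail v x) * E ^ g₁)) *
              (C ((g:ℤ) - g₁) (Sᶜ.card + 1) (Fin.cons (μ 0 - 2 - α) (subT (Fin.tail μ) Sᶜ)) *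
                η 1 ((e b * ∏ x ∈ Sᶜ, Fin.tail v x) * E ^ (g - g₁))))
          = (C g₁ (S.card + 1) (Fin.cons α (subT (Fin.tail μ) S)) *
              C ((g:ℤ) - g₁) (Sᶜ.card + 1) (Fin.cons (μ 0 - 2 - α) (subT (Fin.tail μ) Sᶜ))) *
            (η (v 0) (e k * e l) * N k a * N l b *
              (η 1 (e a * ((∏ x ∈ S, Fin.tail v x) * E ^ g₁)) *
                η 1 (e b * ((∏ x ∈ Sᶜ, Fin.tail v x) * E ^ (g - g₁))))) from by
          rw [show (e a * ∏ x ∈ S, Fin.tail v x) * E ^ g₁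
              = e a * ((∏ x ∈ S, Fin.tail v x) * E ^ g₁) from by ring,
            show (e b * ∏ x ∈ Sᶜ, Fin.tail v x) * E ^ (g - g₁)
              = e b * ((∏ x ∈ Sᶜ, Fin.tail v x) * E ^ (g - g₁)) from by ring]
          ring)) ?_
      simp only [← Finset.mul_sum]
      rw [LB η e N hsym hinv hN hN' (v 0) ((∏ x ∈ S, Fin.tail v x) * E ^ g₁)
        ((∏ x ∈ Sᶜ, Fin.tail v x) * E ^ (g - g₁))]
      congr 1
      have hper : (∏ x ∈ S, Fin.tail v x) * ∏ x ∈ Sᶜ, Fin.tail v x = ∏ i, Fin.tail v i :=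
        Finset.prod_mul_prod_compl S (Fin.tail v)
      have hEp : E ^ (g - g₁) * E ^ g₁ = E ^ g := by
        rw [← pow_add, Nat.sub_add_cancel hle]
      rw [hPt, ← hper, ← hEp]
      ring
end

section
/- (The Euler element of the center of the group algebra is the sum of all commutators.) Let G be a finite group. Then in ℚ[G]: Σ_C |Z_G(r_C)| · z_C · z_{C⁻¹} = Σ_{(a,b) ∈ G×G} a·b·a⁻¹·b⁻¹, where the sum on the left ranges over all conjugacy classes C of G and r_C ∈ C is any choice of representative (the summand does not depend on this choice). In other words, the Euler element of the Frobenius algebra given by the span of the class sums, with pairing η(u,v) = coeff₁(u·v)/|G| for which {z_C} and {|Z_G(r_C)|·z_{C⁻¹}} are dual bases, equals the sum of all commutators of G. -/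
/-- The conjugacy class `[r] = {c·r·c⁻¹ : c ∈ G}` of `r`, as a finset of the finite
group `G`. -/
noncomputable def conjCl (G : Type*) [Group G] [Fintype G] [DecidableEq G] (r : G) :
    Finset G :=
  Finset.univ.filter (fun x => ∃ c : G, c * r * c⁻¹ = x)

/-- The class sum `z_{[r]} = Σ_{σ ∈ [r]} σ ∈ ℚ[G]` of the conjugacy class of `r`. -/
noncomputable def classSum (G : Type*) [Group G] [Fintype G] [DecidableEq G] (r : G) :
    MonoidAlgebra ℚ G :=
  ∑ σ ∈ conjCl G r, MonoidAlgebra.single σ 1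

section aux
variable {G : Type*} [Group G] [Fintype G] [DecidableEq G]

lemma mem_conjCl {r x : G} : x ∈ conjCl G r ↔ IsConj r x := by
  simp [conjCl, isConj_iff]

lemma conjCl_congr {r b : G} (h : IsConj r b) : conjCl G b = conjCl G r := by
  ext x; simp only [mem_conjCl]
  exact ⟨fun hx => h.trans hx, fun hx => h.symm.trans hx⟩

lemma fiber_card {b x : G} (hx : IsConj b x) :
    (Finset.univ.filter fun a : G => a * b * a⁻¹ = x).card =
      (Finset.univ.filter fun a : G => a * b * a⁻¹ = b).card := by
  obtain ⟨c, hc⟩ := (isConj_iff).mp hx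
  apply Finset.card_nbij' (fun a => c⁻¹ * a) (fun a => c * a)
  · intro a ha
    simp only [Finset.mem_coe, Finset.mem_filter, Finset.mem_univ, true_and] at ha ⊢
    have : c⁻¹ * a * b * (c⁻¹ * a)⁻¹ = c⁻¹ * (a * b * a⁻¹) * c := by group
    rw [this, ha, ← hc]; group
  · intro a ha
    simp only [Finset.mem_coe, Finset.mem_filter, Finset.mem_univ, true_and] at ha ⊢
    have : c * a * b * (c * a)⁻¹ = c * (a * b * a⁻¹) * c⁻¹ := by group
    rw [this, ha, hc]
  · intro a _; group
  · intro a _; group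

lemma centralizer_card {r b : G} (h : IsConj r b) :
    (Finset.univ.filter fun a : G => a * b * a⁻¹ = b).card =
      Nat.card (Subgroup.centralizer ({r} : Set G)) := by
  obtain ⟨c, hc⟩ := (isConj_iff).mp h
  have step1 : (Finset.univ.filter fun a : G => a * b * a⁻¹ = b).card =
      (Finset.univ.filter fun a : G => a * r * a⁻¹ = r).card := by
    apply Finset.card_nbij' (fun a => c⁻¹ * a * c) (fun a => c * a * c⁻¹)
    · intro a ha
      simp only [Finset.mem_coe, Finset.mem_filter, Finset.mem_univ, true_and] at ha ⊢
      have hb : b = c * r * c⁻¹ := hc.symm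
      have : c⁻¹ * a * c * r * (c⁻¹ * a * c)⁻¹ = c⁻¹ * (a * (c * r * c⁻¹) * a⁻¹) * c := by group
      rw [this, ← hb, ha, hb]; group
    · intro a ha
      simp only [Finset.mem_coe, Finset.mem_filter, Finset.mem_univ, true_and] at ha ⊢
      have : c * a * c⁻¹ * b * (c * a * c⁻¹)⁻¹ = c * (a * (c⁻¹ * b * c) * a⁻¹) * c⁻¹ := by group
      have hr : c⁻¹ * b * c = r := by rw [← hc]; group
      rw [this, hr, ha, ← hc]
    · intro a _; group
    · intro a _; group
  have h2 : Nat.card (Subgroup.centralizer ({r} : Set G)) =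
      Nat.card {a : G // a * r * a⁻¹ = r} := by
    apply Nat.card_congr
    apply Equiv.subtypeEquivRight
    intro a
    rw [Subgroup.mem_centralizer_singleton_iff]
    exact mul_inv_eq_iff_eq_mul.symm
  rw [step1, h2, ← Fintype.card_eq_nat_card, Fintype.card_subtype]

end aux


/-- (The Euler element of the center of the group algebra is the sum of
all commutators.) For a finite group `G` and any choice `rep` of representatives of the
conjugacy classes of `G` (the summands do not depend on this choice), in `ℚ[G]`:
`Σ_C |Z_G(r_C)| · z_C · z_{C⁻¹} = Σ_{(a,b) ∈ G×G} a·b·a⁻¹·b⁻¹`, the sum on the left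
ranging over all conjugacy classes `C` of `G`.  In other words, the Euler element of the
Frobenius algebra spanned by the class sums, with pairing `η(u,v) = coeff₁(u·v)/|G|` for
which `{z_C}` and `{|Z_G(r_C)|·z_{C⁻¹}}` are dual bases, equals the sum of all
commutators of `G`. -/
theorem stmt16 (G : Type*) [Group G] [Fintype G] [DecidableEq G]
    (rep : ConjClasses G → G)
    (hrep : ∀ C : ConjClasses G, ConjClasses.mk (rep C) = C) :
    ∑ C : ConjClasses G,
        (Nat.card (Subgroup.centralizer ({rep C} : Set G)) : ℚ) •
          (classSum G (rep C) * classSum G (rep C)⁻¹) =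
      ∑ p : G × G, MonoidAlgebra.single (p.1 * p.2 * p.1⁻¹ * p.2⁻¹) (1 : ℚ) := by
  classical
  -- rewrite RHS as fiberwise sum over conjugacy classes
  have rhs : ∑ p : G × G, MonoidAlgebra.single (p.1 * p.2 * p.1⁻¹ * p.2⁻¹) (1 : ℚ) =
      ∑ C : ConjClasses G, ∑ b ∈ Finset.univ.filter (fun b : G => ConjClasses.mk b = C),
        ∑ a : G, MonoidAlgebra.single (a * b * a⁻¹ * b⁻¹) (1 : ℚ) := by
    rw [Finset.sum_fiberwise (Finset.univ) (fun b : G => ConjClasses.mk b) _]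
    rw [Fintype.sum_prod_type]
    exact Finset.sum_comm
  rw [rhs]
  apply Finset.sum_congr rfl
  intro C _
  set r := rep C with hr
  set N := Nat.card (Subgroup.centralizer ({r} : Set G)) with hN
  -- the fiber is the conjugacy class of r
  have hfib : Finset.univ.filter (fun b : G => ConjClasses.mk b = C) = conjCl G r := by
    ext b
    simp only [Finset.mem_filter, Finset.mem_univ, true_and, mem_conjCl]
    rw [← hrep C, ConjClasses.mk_eq_mk_iff_isConj]
    exact ⟨fun h => h.symm, fun h => h.symm⟩
  rw [hfib]
  -- inner sum over a
  have inner : ∀ b ∈ conjCl G r,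
      (∑ a : G, MonoidAlgebra.single (a * b * a⁻¹ * b⁻¹) (1 : ℚ)) =
      ∑ x ∈ conjCl G r, N • MonoidAlgebra.single (x * b⁻¹) (1 : ℚ) := by
    intro b hb
    rw [mem_conjCl] at hb
    have himg : (Finset.univ : Finset G).image (fun a => a * b * a⁻¹) = conjCl G r := by
      rw [← conjCl_congr hb]
      ext x
      simp only [Finset.mem_image, Finset.mem_univ, true_and, mem_conjCl, isConj_iff]
    calc (∑ a : G, MonoidAlgebra.single (a * b * a⁻¹ * b⁻¹) (1 : ℚ))
        = ∑ a : G, (fun x => MonoidAlgebra.single (x * b⁻¹) (1 : ℚ)) ((fun a : G => a * b * a⁻¹) a) := by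
          apply Finset.sum_congr rfl; intro a _; simp [mul_assoc]
      _ = ∑ x ∈ (Finset.univ : Finset G).image (fun a => a * b * a⁻¹),
            (Finset.univ.filter fun a : G => a * b * a⁻¹ = x).card •
              MonoidAlgebra.single (x * b⁻¹) (1 : ℚ) :=
          Finset.sum_comp (fun x => MonoidAlgebra.single (x * b⁻¹) (1 : ℚ))
            (fun a : G => a * b * a⁻¹)
      _ = ∑ x ∈ conjCl G r, N • MonoidAlgebra.single (x * b⁻¹) (1 : ℚ) := by
          rw [himg]
          apply Finset.sum_congr rfl
          intro x hx
          rw [mem_conjCl] at hx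
          rw [fiber_card (hb.symm.trans hx), centralizer_card hb]
  rw [Finset.sum_congr rfl inner]
  -- now handle the LHS
  rw [classSum, classSum, Finset.sum_mul_sum]
  have hinv : conjCl G r⁻¹ = (conjCl G r).image (fun b => b⁻¹) := by
    ext y
    simp only [conjCl, Finset.mem_image, Finset.mem_filter, Finset.mem_univ, true_and]
    constructor
    · rintro ⟨c, rfl⟩
      exact ⟨c * r * c⁻¹, ⟨c, rfl⟩, by group⟩
    · rintro ⟨b, ⟨c, rfl⟩, rfl⟩
      exact ⟨c, by group⟩
  rw [hinv, Nat.cast_smul_eq_nsmul, Finset.smul_sum]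
  have step : ∀ x ∈ conjCl G r,
      (N • ∑ y ∈ (conjCl G r).image (fun b => b⁻¹),
        MonoidAlgebra.single x (1 : ℚ) * MonoidAlgebra.single y 1) =
      ∑ b ∈ conjCl G r, N • MonoidAlgebra.single (x * b⁻¹) (1 : ℚ) := by
    intro x _
    rw [Finset.sum_image (fun a _ c _ h => inv_injective h), Finset.smul_sum]
    apply Finset.sum_congr rfl
    intro b _
    rw [MonoidAlgebra.single_mul_single, one_mul]
  rw [Finset.sum_congr rfl step, Finset.sum_comm]
end
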